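/- For the Airy bilinear form, if the estimate ‖∫₀¹ e^{(1-t')∂ₓₓₓ⁻}∂ₓ(e^{-t'∂ₓₓₓ}u₀ · e^{-t'∂ₓₓₓ}v₀) dt'‖_{H^s} ≲ ‖u₀‖_{H^s}‖v₀‖_{H^s} holds for all Schwartz u₀, v₀, then s ≥ -1. Specifically, with û₀ = χ_{[N,N+1]} and v̂₀ = χ_{[-N-2,-N+2]}, the left side is ≳ N^{-2} for every ξ ∈ [1,2], while ‖u₀‖_{H^s}‖v₀‖_{H^s} ∼ N^{2s}. -/

import Mathlib

open MeasureTheory Complex Set intervalIntegral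
open scoped ENNReal

noncomputable section

def jap (x : ℝ) : ℝ := Real.sqrt (1 + x ^ 2)

/-- Fourier-side magnitude of the second Airy bilinear iterate at time 1:
`⟨ξ⟩^s |ξ| |∫∫₀¹ e^{-3it'ξξ₁(ξ-ξ₁)} û₀(ξ₁) v̂₀(ξ-ξ₁) dt' dξ₁|`. -/
def airyIter (s : ℝ) (w z : ℝ → ℂ) (ξ : ℝ) : ℝ :=
  jap ξ ^ s * |ξ| *
    ‖∫ ξ₁ : ℝ, ∫ t' in (0:ℝ)..1,
      Complex.exp (Complex.I * ((-(3 * t' * ξ * ξ₁ * (ξ - ξ₁)) : ℝ) : ℂ)) *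
        w ξ₁ * z (ξ - ξ₁)‖

lemma osc_bound (ξ N : ℝ) (hN : 100 ≤ N) (hξ : ξ ∈ Icc (1:ℝ) 2) :
    |∫ x in N..(N+1), Real.cos (3*ξ*x*(x-ξ))| ≤ 1/2 := by
  obtain ⟨hξ1, hξ2⟩ := hξ
  set B : ℝ → ℝ := fun x => 3*ξ*x*(x-ξ) with hBdef
  set D : ℝ → ℝ := fun x => 6*ξ*x - 3*ξ^2 with hDdef
  have hIcc : uIcc N (N+1) = Icc N (N+1) := uIcc_of_le (by linarith)
  have hD3N : ∀ x ∈ Icc N (N+1), 3*N ≤ D x := by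
    intro x hx
    have hx1 : N ≤ x := hx.1
    have h1 : (0:ℝ) ≤ (3*ξ - 3) * (2*x - ξ) :=
      mul_nonneg (by linarith) (by linarith)
    simp only [hDdef]; nlinarith
  have hDpos : ∀ x ∈ Icc N (N+1), 0 < D x := fun x hx => lt_of_lt_of_le (by nlinarith) (hD3N x hx)
  have hB' : ∀ x, HasDerivAt B (D x) x := by
    intro x
    have h1 : HasDerivAt (fun x : ℝ => 3*ξ*x) (3*ξ) x := by
      simpa using (hasDerivAt_id x).const_mul (3*ξ)
    have h2 : HasDerivAt (fun x : ℝ => x - ξ) 1 x := (hasDerivAt_id x).sub_const ξ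
    have := h1.mul h2
    exact this.congr_deriv (by show 3 * ξ * (x - ξ) + 3 * ξ * x * 1 = 6*ξ*x - 3*ξ^2; ring)
  have hD' : ∀ x, HasDerivAt D (6*ξ) x := by
    intro x
    have h1 : HasDerivAt (fun x : ℝ => 6*ξ*x) (6*ξ) x := by
      simpa using (hasDerivAt_id x).const_mul (6*ξ)
    exact h1.sub_const (3*ξ^2)
  set φ : ℝ → ℝ := fun x => Real.sin (B x) / D x with hφdef
  set ψ : ℝ → ℝ := fun x => (Real.cos (B x) * D x * D x - Real.sin (B x) * (6*ξ)) / (D x)^2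
    with hψdef
  have hφ' : ∀ x ∈ Icc N (N+1), HasDerivAt φ (ψ x) x := by
    intro x hx
    exact ((hB' x).sin).div (hD' x) (ne_of_gt (hDpos x hx))
  have hψcont : ContinuousOn ψ (Icc N (N+1)) := by
    apply ContinuousOn.div
    · fun_prop
    · fun_prop
    · intro x hx; exact pow_ne_zero 2 (ne_of_gt (hDpos x hx))
  have hgcont : ContinuousOn (fun x => Real.sin (B x) * (6*ξ) / (D x)^2) (Icc N (N+1)) := by
    apply ContinuousOn.div
    · fun_prop
    · fun_prop
    · intro x hx; exact pow_ne_zero 2 (ne_of_gt (hDpos x hx))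
  have hint1 : IntervalIntegrable ψ volume N (N+1) :=
    (hIcc ▸ hψcont).intervalIntegrable
  have hint2 : IntervalIntegrable (fun x => Real.sin (B x) * (6*ξ) / (D x)^2) volume N (N+1) :=
    (hIcc ▸ hgcont).intervalIntegrable
  have hptw : EqOn (fun x => Real.cos (B x))
      (fun x => ψ x + Real.sin (B x) * (6*ξ) / (D x)^2) (uIcc N (N+1)) := by
    rw [hIcc]; intro x hx
    have hD := ne_of_gt (hDpos x hx)
    simp only [hψdef]
    field_simp
    ring
  have hsplit : (∫ x in N..(N+1), Real.cos (B x))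
      = (φ (N+1) - φ N) + ∫ x in N..(N+1), Real.sin (B x)*(6*ξ)/(D x)^2 := by
    rw [integral_congr hptw, integral_add hint1 hint2,
      integral_eq_sub_of_hasDerivAt (fun x hx => hφ' x (hIcc ▸ hx)) hint1]
  have hN0 : (0:ℝ) < N := by linarith
  have habsφ : ∀ y ∈ Icc N (N+1), |φ y| ≤ 1/(3*N) := by
    intro y hy
    have hDy := hD3N y hy
    have hDy0 := hDpos y hy
    rw [hφdef]
    rw [abs_div, abs_of_pos hDy0]
    apply div_le_div₀ (by positivity) (Real.abs_sin_le_one _) (by linarith) hDy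
  have hosc : |∫ x in N..(N+1), Real.sin (B x)*(6*ξ)/(D x)^2| ≤ 12/(9*N^2) := by
    have := intervalIntegral.norm_integral_le_of_norm_le_const
      (a := N) (b := N+1) (C := 12/(9*N^2))
      (f := fun x => Real.sin (B x)*(6*ξ)/(D x)^2) ?_
    · simpa using this
    · intro x hx
      rw [uIoc_of_le (by linarith)] at hx
      have hx' : x ∈ Icc N (N+1) := ⟨le_of_lt hx.1, hx.2⟩
      have hDx := hD3N x hx'
      have hDx0 := hDpos x hx'
      rw [Real.norm_eq_abs, abs_div, abs_of_pos (by positivity : (0:ℝ) < (D x)^2)]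
      apply div_le_div₀ (by positivity) ?_ (by positivity) (by nlinarith)
      calc |Real.sin (B x) * (6*ξ)| ≤ 1 * (6*2) := by
            rw [abs_mul]
            exact mul_le_mul (Real.abs_sin_le_one _) (by rw [abs_of_pos (by linarith)]; linarith)
              (abs_nonneg _) zero_le_one
        _ = 12 := by norm_num
  show |∫ x in N..(N+1), Real.cos (B x)| ≤ 1/2
  rw [hsplit]
  have h1 : 2/(3*N) ≤ 1/100 := by
    rw [div_le_div_iff₀ (by linarith) (by norm_num)]; nlinarith
  have h2 : 12/(9*N^2) ≤ 1/100 := by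
    rw [div_le_div_iff₀ (by positivity) (by norm_num)]; nlinarith
  have hφN := habsφ N (by constructor <;> linarith)
  have hφN1 := habsφ (N+1) (by constructor <;> linarith)
  calc |(φ (N+1) - φ N) + ∫ x in N..(N+1), Real.sin (B x)*(6*ξ)/(D x)^2|
      ≤ |φ (N+1) - φ N| + |∫ x in N..(N+1), Real.sin (B x)*(6*ξ)/(D x)^2| := abs_add_le _ _
    _ ≤ (|φ (N+1)| + |φ N|) + 12/(9*N^2) := add_le_add (abs_sub _ _) hosc
    _ ≤ (1/(3*N) + 1/(3*N)) + 12/(9*N^2) := by linarith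
    _ ≤ 1/2 := by
        have : 1/(3*N) + 1/(3*N) = 2/(3*N) := by ring
        linarith

lemma time_int (b : ℝ) (hb : b ≠ 0) :
    (∫ t' in (0:ℝ)..1, Complex.exp ((Complex.I * b) * t'))
      = (Complex.exp (Complex.I * b) - 1) / (Complex.I * b) := by
  rw [integral_exp_mul_complex (by simp [hb])]
  simp

lemma formula (b : ℝ) (hb : b ≠ 0) :
    (Complex.exp (Complex.I * b) - 1) / (Complex.I * b)
      = ((Real.sin b / b : ℝ) : ℂ) + ((1 - Real.cos b)/b : ℝ) * Complex.I := by
  rw [mul_comm Complex.I (b:ℂ), Complex.exp_mul_I]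
  have hb' : (b:ℂ) ≠ 0 := by exact_mod_cast hb
  push_cast
  have e1 : (Complex.sin b / b) * b = Complex.sin b := div_mul_cancel₀ _ hb'
  have e2 : ((1 - Complex.cos b) / b) * b = 1 - Complex.cos b := div_mul_cancel₀ _ hb'
  rw [div_eq_iff (mul_ne_zero hb' Complex.I_ne_zero)]
  linear_combination (-Complex.I) * e1 + (-Complex.I^2) * e2 + (-(1 - Complex.cos b)) * Complex.I_sq

lemma J_lower (N ξ : ℝ) (hN : 100 ≤ N) (hξ : ξ ∈ Icc (1:ℝ) 2) :
    1/(48*N^2) ≤ ‖∫ ξ₁ : ℝ, ∫ t' in (0:ℝ)..1,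
      Complex.exp (Complex.I * ((-(3 * t' * ξ * ξ₁ * (ξ - ξ₁)) : ℝ) : ℂ)) *
        (Icc N (N+1)).indicator (fun _ => (1:ℂ)) ξ₁ *
        (Icc (-N-2) (-N+2)).indicator (fun _ => (1:ℂ)) (ξ - ξ₁)‖ := by
  obtain ⟨hξ1, hξ2⟩ := hξ
  set B : ℝ → ℝ := fun x => 3*ξ*x*(x-ξ) with hBdef
  have hIcc : uIcc N (N+1) = Icc N (N+1) := uIcc_of_le (by linarith)
  have hBpos : ∀ x ∈ Icc N (N+1), 0 < B x := by
    intro x hx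
    have h1 : (0:ℝ) < 3*ξ := by linarith
    have h2 : (0:ℝ) < x := by have := hx.1; linarith
    have h3 : (0:ℝ) < x - ξ := by have := hx.1; linarith
    simp only [hBdef]; positivity
  have hBle : ∀ x ∈ Icc N (N+1), B x ≤ 24*N^2 := by
    intro x hx
    have hx1 := hx.1; have hx2 := hx.2
    have h1 : x*(x-ξ) ≤ (N+1)*N :=
      mul_le_mul (by linarith) (by linarith) (by linarith) (by linarith)
    simp only [hBdef]
    calc 3*ξ*x*(x-ξ) = (3*ξ)*(x*(x-ξ)) := by ring
      _ ≤ 6*((N+1)*N) := mul_le_mul (by linarith) h1 (by nlinarith) (by norm_num)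
      _ ≤ 24*N^2 := by nlinarith
  set u : ℝ → ℝ := fun x => Real.sin (B x) / B x with hudef
  set v : ℝ → ℝ := fun x => (1 - Real.cos (B x)) / B x with hvdef
  have hBcont : Continuous B := by fun_prop
  have hucont : ContinuousOn u (Icc N (N+1)) :=
    ContinuousOn.div (by fun_prop) hBcont.continuousOn (fun x hx => ne_of_gt (hBpos x hx))
  have hvcont : ContinuousOn v (Icc N (N+1)) :=
    ContinuousOn.div (by fun_prop) hBcont.continuousOn (fun x hx => ne_of_gt (hBpos x hx))
  -- Step 1: integrand as indicator
  have hfun : (fun x : ℝ => ∫ t' in (0:ℝ)..1,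
      Complex.exp (Complex.I * ((-(3 * t' * ξ * x * (ξ - x)) : ℝ) : ℂ)) *
        (Icc N (N+1)).indicator (fun _ => (1:ℂ)) x *
        (Icc (-N-2) (-N+2)).indicator (fun _ => (1:ℂ)) (ξ - x))
      = (Icc N (N+1)).indicator (fun x => ((u x : ℂ) + (v x : ℂ) * Complex.I)) := by
    funext x
    by_cases hx : x ∈ Icc N (N+1)
    · have hz : (Icc (-N-2) (-N+2)).indicator (fun _ => (1:ℂ)) (ξ - x) = 1 := by
        apply indicator_of_mem
        constructor
        · have := hx.2; linarith
        · have := hx.1; linarith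
      have hw : (Icc N (N+1)).indicator (fun _ => (1:ℂ)) x = 1 := indicator_of_mem hx _
      have hphase : ∀ t' : ℝ, Complex.I * ((-(3 * t' * ξ * x * (ξ - x)) : ℝ) : ℂ)
          = (Complex.I * (B x)) * t' := by
        intro t'; push_cast; simp only [hBdef]; push_cast; ring
      simp only [hw, hz, mul_one]
      rw [show (fun t' : ℝ => Complex.exp (Complex.I * ((-(3 * t' * ξ * x * (ξ - x)) : ℝ) : ℂ)))
          = fun t' : ℝ => Complex.exp ((Complex.I * (B x)) * t') from funext fun t' => by rw [hphase]]
      rw [time_int (B x) (ne_of_gt (hBpos x hx)), formula (B x) (ne_of_gt (hBpos x hx))]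
      exact (indicator_of_mem hx (fun x => ((u x : ℂ) + (v x : ℂ) * Complex.I))).symm
    · have hw : (Icc N (N+1)).indicator (fun _ => (1:ℂ)) x = 0 := indicator_of_notMem hx _
      simp only [hw, mul_zero, zero_mul, intervalIntegral.integral_zero,
        indicator_of_notMem hx (fun x => ((u x : ℂ) + (v x : ℂ) * Complex.I))]
  rw [hfun, MeasureTheory.integral_indicator measurableSet_Icc, integral_Icc_eq_integral_Ioc,
    ← intervalIntegral.integral_of_le (by linarith : N ≤ N+1)]
  -- Step 2: split the integral
  have hcu : IntervalIntegrable (fun x => ((u x : ℂ))) volume N (N+1) :=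
    ContinuousOn.intervalIntegrable
      (by rw [hIcc]; exact Complex.continuous_ofReal.comp_continuousOn hucont)
  have hcv : IntervalIntegrable (fun x => ((v x : ℂ)) * Complex.I) volume N (N+1) :=
    ContinuousOn.intervalIntegrable
      (by rw [hIcc]
          exact (Complex.continuous_ofReal.comp_continuousOn hvcont).mul continuousOn_const)
  have hsplit : (∫ x in N..(N+1), ((u x : ℂ) + (v x : ℂ) * Complex.I))
      = ((∫ x in N..(N+1), u x : ℝ) : ℂ) + ((∫ x in N..(N+1), v x : ℝ) : ℂ) * Complex.I := by
    rw [integral_add hcu hcv, intervalIntegral.integral_mul_const,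
      intervalIntegral.integral_ofReal, intervalIntegral.integral_ofReal]
  have hcosint : IntervalIntegrable (fun x => Real.cos (B x)) volume N (N+1) :=
    (Real.continuous_cos.comp hBcont).intervalIntegrable _ _
  have hosc : ∫ x in N..(N+1), Real.cos (B x) ≤ 1/2 := by
    have := osc_bound ξ N hN ⟨hξ1, hξ2⟩
    calc ∫ x in N..(N+1), Real.cos (B x)
        ≤ |∫ x in N..(N+1), Real.cos (3*ξ*x*(x-ξ))| := le_abs_self _
      _ ≤ 1/2 := this
  have hvint : IntervalIntegrable v volume N (N+1) :=
    ContinuousOn.intervalIntegrable (hIcc ▸ hvcont)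
  have hN0 : (0:ℝ) < N := by linarith
  have hlow : 1/(48*N^2) ≤ ∫ x in N..(N+1), v x := by
    have step1 : ∀ x ∈ Icc N (N+1), (1 - Real.cos (B x))/(24*N^2) ≤ v x := by
      intro x hx
      have hB0 := hBpos x hx
      have hB24 := hBle x hx
      have hc1 : Real.cos (B x) ≤ 1 := Real.cos_le_one _
      rw [hvdef]
      rw [div_le_div_iff₀ (by positivity) hB0]
      nlinarith [mul_le_mul_of_nonneg_left hB24 (by linarith : (0:ℝ) ≤ 1 - Real.cos (B x))]
    have hlcont : IntervalIntegrable (fun x => (1 - Real.cos (B x))/(24*N^2)) volume N (N+1) := by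
      apply IntervalIntegrable.div_const
      exact (intervalIntegrable_const.sub hcosint)
    have hmono := intervalIntegral.integral_mono_on (by linarith : N ≤ N+1) hlcont hvint step1
    have hcomp : ∫ x in N..(N+1), (1 - Real.cos (B x))/(24*N^2)
        = (1 - ∫ x in N..(N+1), Real.cos (B x))/(24*N^2) := by
      rw [intervalIntegral.integral_div, intervalIntegral.integral_sub intervalIntegrable_const hcosint]
      norm_num
    rw [hcomp] at hmono
    have : 1/(48*N^2) ≤ (1 - ∫ x in N..(N+1), Real.cos (B x))/(24*N^2) := by
      rw [div_le_div_iff₀ (by positivity) (by positivity)]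
      nlinarith
    linarith
  calc 1/(48*N^2) ≤ ∫ x in N..(N+1), v x := hlow
    _ ≤ |(∫ x in N..(N+1), ((u x : ℂ) + (v x : ℂ) * Complex.I)).im| := by
        rw [hsplit]; simp [le_abs_self]
    _ ≤ ‖∫ x in N..(N+1), ((u x : ℂ) + (v x : ℂ) * Complex.I)‖ := Complex.abs_im_le_norm _

lemma jap_ge_abs (x : ℝ) : |x| ≤ jap x := by
  rw [jap, ← Real.sqrt_sq_eq_abs]
  exact Real.sqrt_le_sqrt (by nlinarith [_root_.sq_abs x])

lemma jap_ge_one (x : ℝ) : 1 ≤ jap x := by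
  have h := Real.sqrt_le_sqrt (show (1:ℝ) ≤ 1 + x^2 by nlinarith)
  rw [jap]; simpa using h

lemma jap_pos (x : ℝ) : 0 < jap x := lt_of_lt_of_le one_pos (jap_ge_one x)

lemma jap_le_three (x : ℝ) (hx : x ∈ Icc (1:ℝ) 2) : jap x ≤ 3 := by
  rw [jap, show (3:ℝ) = Real.sqrt 9 by rw [show (9:ℝ) = 3^2 by norm_num, Real.sqrt_sq]; norm_num]
  exact Real.sqrt_le_sqrt (by nlinarith [hx.1, hx.2])

lemma rhs_upper (s a b c : ℝ) (hs : s ≤ 0) (hc : 0 < c)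
    (hjap : ∀ ξ ∈ Icc a b, c ≤ jap ξ) :
    eLpNorm (fun ξ : ℝ => jap ξ ^ s * ‖(Icc a b).indicator (fun _ => (1:ℂ)) ξ‖) 2 volume ≤
      ENNReal.ofReal (c ^ s) * (ENNReal.ofReal (b - a)) ^ ((1:ℝ)/2) := by
  have hmono : ∀ ξ : ℝ, ‖jap ξ ^ s * ‖(Icc a b).indicator (fun _ => (1:ℂ)) ξ‖‖ ≤
      ‖(Icc a b).indicator (fun _ => c ^ s) ξ‖ := by
    intro ξ
    by_cases hξ : ξ ∈ Icc a b
    · rw [indicator_of_mem hξ, indicator_of_mem hξ]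
      simp only [norm_one, mul_one, Real.norm_eq_abs]
      rw [_root_.abs_of_nonneg (Real.rpow_nonneg (jap_pos ξ).le s),
        _root_.abs_of_nonneg (Real.rpow_nonneg hc.le s)]
      exact Real.rpow_le_rpow_of_nonpos hc (hjap ξ hξ) hs
    · rw [indicator_of_notMem hξ, indicator_of_notMem hξ]
      simp
  calc eLpNorm (fun ξ : ℝ => jap ξ ^ s * ‖(Icc a b).indicator (fun _ => (1:ℂ)) ξ‖) 2 volume
      ≤ eLpNorm ((Icc a b).indicator (fun _ => c ^ s)) 2 volume := eLpNorm_mono hmono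
    _ = ‖c ^ s‖₊ * (volume (Icc a b)) ^ (1/(2:ℝ≥0∞).toReal) :=
        eLpNorm_indicator_const measurableSet_Icc (by norm_num) (by norm_num)
    _ = ENNReal.ofReal (c ^ s) * (ENNReal.ofReal (b - a)) ^ ((1:ℝ)/2) := by
        rw [Real.volume_Icc, ← enorm_eq_nnnorm, ← ofReal_norm, Real.norm_eq_abs,
          _root_.abs_of_nonneg (Real.rpow_nonneg hc.le s)]
        norm_num

lemma lhs_lower (c₁ : ℝ) (hc₁ : 0 ≤ c₁) (f : ℝ → ℝ)
    (hf : ∀ ξ ∈ Icc (1:ℝ) 2, c₁ ≤ f ξ) (hf0 : ∀ ξ, 0 ≤ f ξ) :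
    ENNReal.ofReal c₁ ≤ eLpNorm f 2 volume := by
  have hmono : ∀ ξ : ℝ, ‖(Icc (1:ℝ) 2).indicator (fun _ => c₁) ξ‖ ≤ ‖f ξ‖ := by
    intro ξ
    by_cases hξ : ξ ∈ Icc (1:ℝ) 2
    · rw [indicator_of_mem hξ, Real.norm_eq_abs, Real.norm_eq_abs, _root_.abs_of_nonneg hc₁,
        _root_.abs_of_nonneg (hf0 ξ)]
      exact hf ξ hξ
    · rw [indicator_of_notMem hξ]; simp
  calc ENNReal.ofReal c₁ = ‖c₁‖₊ * (volume (Icc (1:ℝ) 2)) ^ (1/(2:ℝ≥0∞).toReal) := by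
        rw [Real.volume_Icc, show (2:ℝ) - 1 = 1 by norm_num, ENNReal.ofReal_one,
          ENNReal.one_rpow, mul_one, ← enorm_eq_nnnorm, ← ofReal_norm, Real.norm_eq_abs,
          _root_.abs_of_nonneg hc₁]
    _ = eLpNorm ((Icc (1:ℝ) 2).indicator (fun _ => c₁)) 2 volume :=
        (eLpNorm_indicator_const (p := 2) (μ := volume) (c := c₁) (s := Icc (1:ℝ) 2) measurableSet_Icc (by norm_num) (by norm_num)).symm
    _ ≤ eLpNorm f 2 volume := eLpNorm_mono hmono

/-- Necessity: if `‖∫₀¹ K(1-t')∂ₓ(K(t')u₀ K(t')v₀) dt'‖_{H^s} ≲ ‖u₀‖_{H^s}‖v₀‖_{H^s}`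
(Fourier-side formulation, quantifying over Fourier data `w, z`), then `s ≥ -1`. -/
theorem airy_bilinear_necessity (s : ℝ)
    (h : ∃ C : ℝ, 0 < C ∧ ∀ w z : ℝ → ℂ,
      eLpNorm (fun ξ : ℝ => airyIter s w z ξ) 2 volume ≤
        ENNReal.ofReal C *
          eLpNorm (fun ξ : ℝ => jap ξ ^ s * ‖w ξ‖) 2 volume *
          eLpNorm (fun ξ : ℝ => jap ξ ^ s * ‖z ξ‖) 2 volume) :
    -1 ≤ s := by
  by_contra hcon
  push_neg at hcon
  have hs0 : s ≤ 0 := by linarith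
  obtain ⟨C, hC, hb⟩ := h
  have hT : (0:ℝ) < (3:ℝ) ^ s := Real.rpow_pos_of_pos (by norm_num) s
  set T : ℝ := (3:ℝ) ^ s with hTdef
  have hM : (0:ℝ) < 96 * C * (2:ℝ) ^ (-s) := by
    have := Real.rpow_pos_of_pos (show (0:ℝ) < 2 by norm_num) (-s); positivity
  set M : ℝ := 96 * C * (2:ℝ) ^ (-s) with hMdef
  have he : (0:ℝ) < -(2 + 2*s) := by linarith
  set e : ℝ := -(2 + 2*s) with hedef
  set N : ℝ := max 100 ((M/T + 1) ^ e⁻¹) with hNdef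
  have hN : (100:ℝ) ≤ N := le_max_left _ _
  have hN0 : (0:ℝ) < N := by linarith
  set w : ℝ → ℂ := (Icc N (N+1)).indicator (fun _ => (1:ℂ)) with hwdef
  set z : ℝ → ℂ := (Icc (-N-2) (-N+2)).indicator (fun _ => (1:ℂ)) with hzdef
  -- lower bound on the left-hand side
  have hlow : ∀ ξ ∈ Icc (1:ℝ) 2, T * (1/(48*N^2)) ≤ airyIter s w z ξ := by
    intro ξ hξ
    have h1 : T ≤ jap ξ ^ s :=
      Real.rpow_le_rpow_of_nonpos (jap_pos ξ) (jap_le_three ξ hξ) hs0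
    have h2 : (1:ℝ) ≤ |ξ| := by
      rw [_root_.abs_of_nonneg (by linarith [hξ.1])]; exact hξ.1
    have h3 := J_lower N ξ hN hξ
    have hj : (0:ℝ) ≤ jap ξ ^ s := Real.rpow_nonneg (jap_pos ξ).le s
    rw [airyIter]
    calc T * (1/(48*N^2)) = (T * 1) * (1/(48*N^2)) := by ring
      _ ≤ (jap ξ ^ s * |ξ|) * ‖∫ ξ₁ : ℝ, ∫ t' in (0:ℝ)..1,
            Complex.exp (Complex.I * ((-(3 * t' * ξ * ξ₁ * (ξ - ξ₁)) : ℝ) : ℂ)) *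
              w ξ₁ * z (ξ - ξ₁)‖ := by
          apply mul_le_mul (mul_le_mul h1 h2 (by norm_num) hj) h3 (by positivity)
          positivity
  have hc₁pos : (0:ℝ) < T * (1/(48*N^2)) := by positivity
  have hL : ENNReal.ofReal (T * (1/(48*N^2))) ≤
      eLpNorm (fun ξ : ℝ => airyIter s w z ξ) 2 volume := by
    apply lhs_lower _ hc₁pos.le _ hlow
    intro ξ
    rw [airyIter]
    exact mul_nonneg (mul_nonneg (Real.rpow_nonneg (jap_pos ξ).le s) (abs_nonneg _))
      (norm_nonneg _)
  -- upper bounds on the right-hand side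
  have hWn : eLpNorm (fun ξ : ℝ => jap ξ ^ s * ‖w ξ‖) 2 volume ≤ ENNReal.ofReal (N ^ s) := by
    have hjap : ∀ ξ ∈ Icc N (N+1), N ≤ jap ξ := by
      intro ξ hξ
      calc N ≤ ξ := hξ.1
        _ ≤ |ξ| := le_abs_self ξ
        _ ≤ jap ξ := jap_ge_abs ξ
    have := rhs_upper s N (N+1) N hs0 hN0 hjap
    rw [show N + 1 - N = (1:ℝ) by ring, ENNReal.ofReal_one, ENNReal.one_rpow, mul_one] at this
    exact this
  have hZn : eLpNorm (fun ξ : ℝ => jap ξ ^ s * ‖z ξ‖) 2 volume ≤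
      ENNReal.ofReal ((N/2) ^ s * 2) := by
    have hjap : ∀ ξ ∈ Icc (-N-2) (-N+2), N/2 ≤ jap ξ := by
      intro ξ hξ
      have : N/2 ≤ |ξ| := by
        rw [abs_of_nonpos (by linarith [hξ.2])]
        linarith [hξ.2]
      linarith [jap_ge_abs ξ]
    have h2 := rhs_upper s (-N-2) (-N+2) (N/2) hs0 (by linarith) hjap
    have h4 : (ENNReal.ofReal ((-N+2) - (-N-2))) ^ ((1:ℝ)/2) = ENNReal.ofReal 2 := by
      rw [show (-N+2) - (-N-2) = (4:ℝ) by ring, ENNReal.ofReal_rpow_of_pos (by norm_num)]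
      congr 1
      rw [show (4:ℝ) = 2^(2:ℕ) by norm_num, ← Real.rpow_natCast 2 2,
        ← Real.rpow_mul (by norm_num)]
      norm_num
    rw [h4, ← ENNReal.ofReal_mul (Real.rpow_nonneg (by linarith) s)] at h2
    exact h2
  -- combine
  have hrhs : ENNReal.ofReal C *
        eLpNorm (fun ξ : ℝ => jap ξ ^ s * ‖w ξ‖) 2 volume *
        eLpNorm (fun ξ : ℝ => jap ξ ^ s * ‖z ξ‖) 2 volume ≤
      ENNReal.ofReal (C * (N ^ s) * ((N/2) ^ s * 2)) := by
    rw [ENNReal.ofReal_mul (by positivity), ENNReal.ofReal_mul hC.le]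
    exact mul_le_mul' (mul_le_mul' le_rfl hWn) hZn
  have hreal : T * (1/(48*N^2)) ≤ C * (N ^ s) * ((N/2) ^ s * 2) := by
    rw [← ENNReal.ofReal_le_ofReal_iff (by positivity)]
    exact le_trans hL (le_trans (hb w z) hrhs)
  -- arithmetic
  have h48 : (0:ℝ) < 48 * N^2 := by positivity
  have key : T ≤ M * N ^ (2 + 2*s) := by
    have hmul := mul_le_mul_of_nonneg_right hreal h48.le
    have hl : T * (1/(48*N^2)) * (48*N^2) = T := by field_simp
    have h2s : (0:ℝ) < (2:ℝ)^s := Real.rpow_pos_of_pos (by norm_num) s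
    have hr : C * (N ^ s) * ((N/2) ^ s * 2) * (48*N^2) = M * N ^ (2 + 2*s) := by
      rw [Real.div_rpow hN0.le (by norm_num), hMdef,
        show (2 + 2*s) = (2:ℝ) + (s + s) by ring, Real.rpow_add hN0, Real.rpow_add hN0,
        Real.rpow_two, Real.rpow_neg (by norm_num : (0:ℝ) ≤ 2)]
      field_simp
      ring
    rw [hl, hr] at hmul
    exact hmul
  have hX : (0:ℝ) ≤ M/T + 1 := by positivity
  have hNe : M/T + 1 ≤ N ^ e := by
    calc M/T + 1 = ((M/T + 1) ^ e⁻¹) ^ e := by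
          rw [← Real.rpow_mul hX, inv_mul_cancel₀ (ne_of_gt he), Real.rpow_one]
      _ ≤ N ^ e := Real.rpow_le_rpow (Real.rpow_nonneg hX _) (le_max_right _ _) he.le
  have hNee : N ^ (2 + 2*s) = (N ^ e)⁻¹ := by
    rw [show (2 + 2*s) = -e by rw [hedef]; ring, Real.rpow_neg hN0.le]
  have hXpos : (0:ℝ) < M/T + 1 := by positivity
  have hfin : T ≤ M * (M/T + 1)⁻¹ := by
    rw [hNee] at key
    calc T ≤ M * (N ^ e)⁻¹ := key
      _ ≤ M * (M/T + 1)⁻¹ :=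
          mul_le_mul_of_nonneg_left (inv_anti₀ hXpos hNe) hM.le
  have hlt : M * (M/T + 1)⁻¹ < T := by
    rw [mul_inv_lt_iff₀ hXpos]
    have : T * (M/T + 1) = M + T := by field_simp
    rw [this]
    linarith
  linarith
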